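/- Let φ be a Bernstein function. Then for all z with Re(z) > 0, |φ'(z)/φ(z)| ≤ 2/Re(z). -/

import Mathlib

open MeasureTheory Set Filter

private lemma texp_le (t : ℝ) (_ht : 0 ≤ t) : t * Real.exp (-t) ≤ 1 - Real.exp (-t) := by
  have h1 := Real.add_one_le_exp t
  have h2 : Real.exp (-t) * Real.exp t = 1 := by
    rw [← Real.exp_add]; simp
  have h3 : (0:ℝ) < Real.exp (-t) := Real.exp_pos _
  nlinarith

private lemma texp_le_one (t : ℝ) (ht : 0 ≤ t) : t * Real.exp (-t) ≤ 1 := by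
  have h1 := texp_le t ht
  have h2 : (0:ℝ) < Real.exp (-t) := Real.exp_pos _
  linarith

set_option maxHeartbeats 1000000 in
theorem bernstein_logderiv_bound
    (q d : ℝ) (hq : 0 ≤ q) (hd : 0 ≤ d)
    (μ : Measure ℝ)
    (hμ : ∫⁻ y in Set.Ioi (0:ℝ), ENNReal.ofReal (min y 1) ∂μ < ⊤)
    (hnz : 0 < q ∨ 0 < d ∨ 0 < μ (Set.Ioi (0:ℝ)))
    (φ : ℂ → ℂ)
    (hφ : ∀ z : ℂ, 0 < z.re →
      φ z = (q : ℂ) + (d : ℂ) * z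
        + ∫ y in Set.Ioi (0:ℝ), (1 - Complex.exp (-(z * (y : ℂ)))) ∂μ)
    (hint : ∀ z : ℂ, 0 < z.re →
      IntegrableOn (fun y : ℝ => 1 - Complex.exp (-(z * (y : ℂ)))) (Set.Ioi 0) μ)
    (hdiff : ∀ z : ℂ, 0 < z.re → DifferentiableAt ℂ φ z) :
    ∀ z : ℂ, 0 < z.re → ‖deriv φ z / φ z‖ ≤ 2 / z.re := by
  intro z hz
  set x := z.re with hxdef
  have hx : 0 < x := hz
  set ν := μ.restrict (Set.Ioi (0:ℝ)) with hν
  have hae : ∀ᵐ y ∂ν, y ∈ Set.Ioi (0:ℝ) := ae_restrict_mem measurableSet_Ioi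
  -- integrability of min y 1
  have hmin : Integrable (fun y : ℝ => min y 1) ν := by
    refine ⟨(measurable_id.min measurable_const).aestronglyMeasurable, ?_⟩
    rw [hasFiniteIntegral_iff_ofReal ?_]
    · exact hμ
    · filter_upwards [hae] with y hy
      exact le_min hy.le one_pos.le
  -- derivative of the parametric integral
  have key := hasDerivAt_integral_of_dominated_loc_of_deriv_le
    (F := fun (w : ℂ) (y : ℝ) => (1 : ℂ) - Complex.exp (-(w * (y:ℂ))))
    (F' := fun (w : ℂ) (y : ℝ) => (y:ℂ) * Complex.exp (-(w * (y:ℂ))))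
    (x₀ := z) (μ := ν) (bound := fun y => (1 + 2/x) * min y 1) (s := Metric.ball z (x/2))
    (Metric.ball_mem_nhds z (half_pos hx))
    (Filter.Eventually.of_forall (fun w => by
      exact (Continuous.aestronglyMeasurable (by continuity))))
    (hint z hz)
    (Continuous.aestronglyMeasurable (by continuity))
    (by
      filter_upwards [hae] with y hy w hw
      have hy0 : (0:ℝ) < y := hy
      have hwre : x/2 ≤ w.re := by
        have h1 : |(w - z).re| ≤ ‖w - z‖ := Complex.abs_re_le_norm _
        have h2 : ‖w - z‖ < x/2 := by
          rw [Metric.mem_ball, Complex.dist_eq] at hw; exact hw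
        have := abs_lt.mp (lt_of_le_of_lt h1 h2)
        simp only [Complex.sub_re] at this
        linarith [this.1]
      have hwre0 : (0:ℝ) < w.re := lt_of_lt_of_le (half_pos hx) hwre
      have hnorm : ‖(y:ℂ) * Complex.exp (-(w * (y:ℂ)))‖
          = y * Real.exp (-(w.re * y)) := by
        rw [norm_mul, Complex.norm_exp,
          Complex.norm_real, Real.norm_eq_abs, abs_of_pos hy0]
        congr 2
        simp [Complex.mul_re]
      rw [hnorm]
      rcases le_total y 1 with hy1 | hy1
      · have : min y 1 = y := min_eq_left hy1
        rw [this]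
        have he : Real.exp (-(w.re * y)) ≤ 1 := by
          rw [Real.exp_le_one_iff]
          nlinarith
        nlinarith [div_pos two_pos hx]
      · have : min y 1 = 1 := min_eq_right hy1
        rw [this, mul_one]
        have hmono : Real.exp (-(w.re * y)) ≤ Real.exp (-(x/2 * y)) := by
          apply Real.exp_le_exp.mpr
          nlinarith
        have hkey : (x/2 * y) * Real.exp (-(x/2 * y)) ≤ 1 :=
          texp_le_one _ (by positivity)
        have h2x : (0:ℝ) < 2/x := div_pos two_pos hx
        calc y * Real.exp (-(w.re * y)) ≤ y * Real.exp (-(x/2 * y)) := by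
              exact mul_le_mul_of_nonneg_left hmono hy0.le
          _ = (2/x) * ((x/2 * y) * Real.exp (-(x/2 * y))) := by
              field_simp
          _ ≤ (2/x) * 1 := by
              exact mul_le_mul_of_nonneg_left hkey h2x.le
          _ ≤ 1 + 2/x := by linarith)
    (hmin.const_mul _)
    (by
      filter_upwards [hae] with y _ w _
      have h0 : HasDerivAt (fun w : ℂ => -(w * (y:ℂ))) (-(y:ℂ)) w :=
        (hasDerivAt_mul_const (y:ℂ)).neg
      have h1 := (h0.cexp).const_sub (1:ℂ)
      convert h1 using 1
      ring)
  obtain ⟨hF'int, hder⟩ := key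
  -- derivative of φ
  set D : ℂ := (d:ℂ) + ∫ y in Set.Ioi (0:ℝ), (y:ℂ) * Complex.exp (-(z * (y:ℂ))) ∂μ with hD
  have hgder : HasDerivAt (fun w : ℂ =>
      (q : ℂ) + (d : ℂ) * w + ∫ y in Set.Ioi (0:ℝ), (1 - Complex.exp (-(w * (y:ℂ)))) ∂μ) D z := by
    have h1 : HasDerivAt (fun w : ℂ => (q : ℂ) + (d : ℂ) * w) (d:ℂ) z := by
      simpa using ((hasDerivAt_id z).const_mul (d:ℂ)).const_add (q:ℂ)
    exact h1.add hder
  have heq : φ =ᶠ[nhds z] (fun w : ℂ =>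
      (q : ℂ) + (d : ℂ) * w + ∫ y in Set.Ioi (0:ℝ), (1 - Complex.exp (-(w * (y:ℂ)))) ∂μ) := by
    have hopen : IsOpen {w : ℂ | 0 < w.re} := isOpen_lt continuous_const Complex.continuous_re
    filter_upwards [hopen.mem_nhds hz] with w hw
    exact hφ w hw
  have hφder : HasDerivAt φ D z := hgder.congr_of_eventuallyEq heq
  have hderiv_eq : deriv φ z = D := hφder.deriv
  -- real integrands
  have hF'norm : ∀ᵐ (y : ℝ) ∂ν, ‖(y:ℂ) * Complex.exp (-(z * (y:ℂ)))‖ = y * Real.exp (-(x * y)) := by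
    filter_upwards [hae] with y hy
    rw [norm_mul, Complex.norm_exp,
      Complex.norm_real, Real.norm_eq_abs, abs_of_pos hy]
    congr 2
    simp [Complex.mul_re, hxdef]
  have IA : Integrable (fun y => y * Real.exp (-(x * y))) ν :=
    hF'int.norm.congr hF'norm
  have hxC : ((x:ℂ)).re = x := by simp
  have h1C : Integrable (fun y : ℝ => (1:ℂ) - Complex.exp (-((x:ℂ) * (y:ℂ)))) ν := by
    have := hint (x:ℂ) (by rw [hxC]; exact hx)
    exact this
  have hcast : ∀ y : ℝ, ((1:ℂ) - Complex.exp (-((x:ℂ) * (y:ℂ)))).re = 1 - Real.exp (-(x * y)) := by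
    intro y
    have h1 : (Complex.exp (-((x:ℂ) * (y:ℂ)))).re = Real.exp (-(x * y)) := by
      rw [Complex.exp_re]
      simp [Complex.mul_re, Complex.mul_im]
    simp [Complex.sub_re, h1]
  have IB : Integrable (fun y => 1 - Real.exp (-(x * y))) ν := by
    refine h1C.re.congr (Filter.Eventually.of_forall fun y => ?_)
    exact hcast y
  -- A and P
  set A : ℝ := d + ∫ y in Set.Ioi (0:ℝ), y * Real.exp (-(x * y)) ∂μ with hA
  set P : ℝ := q + d * x + ∫ y in Set.Ioi (0:ℝ), (1 - Real.exp (-(x * y))) ∂μ with hP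
  have hintnn : (0:ℝ) ≤ ∫ y in Set.Ioi (0:ℝ), y * Real.exp (-(x * y)) ∂μ := by
    apply integral_nonneg_of_ae
    filter_upwards [hae] with y hy
    have hy' : (0:ℝ) < y := hy
    positivity
  have hBnn : (0:ℝ) ≤ ∫ y in Set.Ioi (0:ℝ), (1 - Real.exp (-(x * y))) ∂μ := by
    apply integral_nonneg_of_ae
    filter_upwards [hae] with y hy
    have hy' : (0:ℝ) < y := hy
    have : Real.exp (-(x * y)) ≤ 1 := by
      rw [Real.exp_le_one_iff]; nlinarith
    show (0:ℝ) ≤ 1 - Real.exp (-(x * y))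
    linarith
  have hA0 : 0 ≤ A := by rw [hA]; linarith
  -- P > 0
  have hPpos : 0 < P := by
    rcases hnz with h | h | h
    · rw [hP]; nlinarith
    · rw [hP]; nlinarith
    · have hpos : 0 < ∫ y in Set.Ioi (0:ℝ), (1 - Real.exp (-(x * y))) ∂μ := by
        rw [setIntegral_pos_iff_support_of_nonneg_ae ?_ IB]
        · have hsub : Set.Ioi (0:ℝ) ⊆ Function.support (fun y => 1 - Real.exp (-(x * y))) := by
            intro y hy
            have : Real.exp (-(x * y)) < 1 := by
              rw [Real.exp_lt_one_iff]
              have : (0:ℝ) < y := hy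
              nlinarith
            simp only [Function.mem_support]
            intro hc
            linarith
          rwa [Set.inter_eq_right.mpr hsub]
        · filter_upwards [hae] with y hy
          have hy' : (0:ℝ) < y := hy
          have : Real.exp (-(x * y)) ≤ 1 := by
            rw [Real.exp_le_one_iff]; nlinarith
          simp only [Pi.zero_apply]
          linarith
      rw [hP]; nlinarith
  -- |deriv φ z| ≤ A
  have habsD : ‖deriv φ z‖ ≤ A := by
    rw [hderiv_eq, hD]
    calc ‖(d:ℂ) + ∫ y in Set.Ioi (0:ℝ), (y:ℂ) * Complex.exp (-(z * (y:ℂ))) ∂μ‖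
        ≤ ‖(d:ℂ)‖ + ‖∫ y in Set.Ioi (0:ℝ), (y:ℂ) * Complex.exp (-(z * (y:ℂ))) ∂μ‖ := by
          exact norm_add_le _ _
      _ ≤ d + ∫ y in Set.Ioi (0:ℝ), y * Real.exp (-(x * y)) ∂μ := by
          apply add_le_add
          · rw [Complex.norm_real, Real.norm_eq_abs, abs_of_nonneg hd]
          · calc ‖∫ y in Set.Ioi (0:ℝ), (y:ℂ) * Complex.exp (-(z * (y:ℂ))) ∂μ‖
                ≤ ∫ y in Set.Ioi (0:ℝ), ‖(y:ℂ) * Complex.exp (-(z * (y:ℂ)))‖ ∂μ := by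
                  exact norm_integral_le_integral_norm _
              _ = ∫ y in Set.Ioi (0:ℝ), y * Real.exp (-(x * y)) ∂μ :=
                  integral_congr_ae hF'norm
  -- P ≤ |φ z|
  have hReφ : P ≤ (φ z).re := by
    rw [hφ z hz]
    have hre : ((q : ℂ) + (d : ℂ) * z + ∫ y in Set.Ioi (0:ℝ), (1 - Complex.exp (-(z * (y:ℂ)))) ∂μ).re
        = q + d * x + (∫ y in Set.Ioi (0:ℝ), (1 - Complex.exp (-(z * (y:ℂ)))) ∂μ).re := by
      simp [Complex.add_re, Complex.mul_re, hxdef]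
    rw [hre]
    have hintre : (∫ y in Set.Ioi (0:ℝ), (1 - Complex.exp (-(z * (y:ℂ)))) ∂μ).re
        = ∫ y in Set.Ioi (0:ℝ), ((1:ℂ) - Complex.exp (-(z * (y:ℂ)))).re ∂μ := by
      have h := (integral_re (μ := ν) (hint z hz)).symm
      simpa [RCLike.re_eq_complex_re] using h
    rw [hintre]
    have hmono : ∫ y in Set.Ioi (0:ℝ), (1 - Real.exp (-(x * y))) ∂μ
        ≤ ∫ y in Set.Ioi (0:ℝ), ((1:ℂ) - Complex.exp (-(z * (y:ℂ)))).re ∂μ := by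
      apply integral_mono_ae IB (hint z hz).re
      filter_upwards [hae] with y hy
      show 1 - Real.exp (-(x * y)) ≤ ((1:ℂ) - Complex.exp (-(z * (y:ℂ)))).re
      have hexp : (Complex.exp (-(z * (y:ℂ)))).re
          = Real.exp (-(x * y)) * Real.cos (-(z.im * y)) := by
        rw [Complex.exp_re]
        congr 2
        · simp [Complex.mul_re, hxdef]
        · simp [Complex.mul_im]
      simp only [Complex.sub_re, Complex.one_re]
      rw [hexp]
      have hcos : Real.cos (-(z.im * y)) ≤ 1 := Real.cos_le_one _
      have hep : (0:ℝ) < Real.exp (-(x * y)) := Real.exp_pos _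
      nlinarith
    rw [hP]
    linarith
  have hφabs : P ≤ ‖φ z‖ := le_trans hReφ (Complex.re_le_norm _)
  have hφpos : 0 < ‖φ z‖ := lt_of_lt_of_le hPpos hφabs
  -- x * A ≤ P
  have hxA : x * A ≤ P := by
    have hmono2 : ∫ y in Set.Ioi (0:ℝ), x * (y * Real.exp (-(x * y))) ∂μ
        ≤ ∫ y in Set.Ioi (0:ℝ), (1 - Real.exp (-(x * y))) ∂μ := by
      apply integral_mono_ae (IA.const_mul x) IB
      filter_upwards [hae] with y hy
      have hy' : (0:ℝ) < y := hy
      have := texp_le (x * y) (by positivity)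
      calc x * (y * Real.exp (-(x * y))) = (x * y) * Real.exp (-(x * y)) := by ring
        _ ≤ 1 - Real.exp (-(x * y)) := this
    have heqi : ∫ y in Set.Ioi (0:ℝ), x * (y * Real.exp (-(x * y))) ∂μ
        = x * ∫ y in Set.Ioi (0:ℝ), y * Real.exp (-(x * y)) ∂μ := by
      exact integral_const_mul x _
    rw [hA, hP]
    rw [heqi] at hmono2
    nlinarith
  -- conclude
  rw [norm_div]
  calc ‖deriv φ z‖ / ‖φ z‖ ≤ A / P :=
        div_le_div₀ hA0 habsD hPpos hφabs
    _ ≤ 1 / x := by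
        rw [div_le_div_iff₀ hPpos hx]
        linarith
    _ ≤ 2 / x := by
        rw [div_le_div_iff₀ hx hx]
        nlinarith
    _ = 2 / z.re := rfl
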